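/- Let R be a quasi-consistent Riordan array, i.e., the Riordan array determined by a nonnegative A-sequence (a_n) and Z-sequence (z_n) with z_n = a_{n+1} for all n, and let r ≥ 1. If (a_n) is a Pólya frequency sequence of order r (PF_r), then R is totally positive of order r (TP_r). -/

import Mathlib

/-- An infinite real matrix `M` is totally positive of order `r` (TP_r) if every minor of
order `k ≤ r` (determinant of a `k × k` submatrix with rows and columns chosen in
increasing order) is nonnegative. -/
def IsTPOrder (r : ℕ) (M : ℕ → ℕ → ℝ) : Prop :=
  ∀ k : ℕ, k ≤ r → ∀ rows cols : Fin k → ℕ, StrictMono rows → StrictMono cols →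
    0 ≤ (Matrix.of fun i j => M (rows i) (cols j)).det

/-- The Toeplitz matrix `[a_{i-j}]` of a sequence `a` (with `a m = 0` for `m < 0`). -/
def toeplitz (a : ℕ → ℝ) : ℕ → ℕ → ℝ := fun i j => if j ≤ i then a (i - j) else 0

/-- A nonnegative sequence is a Pólya frequency sequence of order `r` (PF_r)
if its Toeplitz matrix is TP_r. -/
def IsPFOrder (r : ℕ) (a : ℕ → ℝ) : Prop := IsTPOrder r (toeplitz a)

open Finset

noncomputable def sortOf {k N : ℕ} (f : Fin k → Fin N) : Fin k → Fin N :=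
  if h : Function.Injective f then
    (Finset.univ.image f).orderEmbOfFin
      (by rw [Finset.card_image_of_injective _ h, Finset.card_univ, Fintype.card_fin])
  else f

lemma sortOf_strictMono {k N : ℕ} {f : Fin k → Fin N} (h : Function.Injective f) :
    StrictMono (sortOf f) := by
  rw [sortOf, dif_pos h]
  exact (Finset.orderEmbOfFin _ _).strictMono

lemma image_sortOf {k N : ℕ} {f : Fin k → Fin N} (h : Function.Injective f) :
    Finset.univ.image (sortOf f) = Finset.univ.image f := by
  rw [sortOf, dif_pos h]
  apply Finset.coe_injective
  rw [Finset.coe_image, Finset.coe_univ, Set.image_univ]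
  exact Finset.range_orderEmbOfFin _ _

lemma strictMono_eq_of_image {k N : ℕ} {f g : Fin k → Fin N} (hf : StrictMono f)
    (hg : StrictMono g) (him : Finset.univ.image f = Finset.univ.image g) : f = g := by
  have hcard : (Finset.univ.image g).card = k := by
    rw [Finset.card_image_of_injective _ hg.injective, Finset.card_univ, Fintype.card_fin]
  exact (Finset.orderEmbOfFin_unique hcard
      (fun x => him ▸ Finset.mem_image_of_mem f (mem_univ x)) hf).trans
    (Finset.orderEmbOfFin_unique hcard
      (fun x => Finset.mem_image_of_mem g (mem_univ x)) hg).symm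

lemma sortOf_eq {k N : ℕ} {f g : Fin k → Fin N} (hf : Function.Injective f) (hg : StrictMono g)
    (him : Finset.univ.image f = Finset.univ.image g) : sortOf f = g :=
  strictMono_eq_of_image (sortOf_strictMono hf) hg ((image_sortOf hf).trans him)

lemma exists_perm_comp {k N : ℕ} (f g : Fin k → Fin N) (hf : Function.Injective f)
    (hg : Function.Injective g) (him : Finset.univ.image f = Finset.univ.image g) :
    ∃ σ : Equiv.Perm (Fin k), f = g ∘ σ := by
  set S := Finset.univ.image f with hS
  have hmf : ∀ i, f i ∈ S := fun i => Finset.mem_image_of_mem f (mem_univ i)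
  have hmg : ∀ i, g i ∈ S := fun i => him ▸ Finset.mem_image_of_mem g (mem_univ i)
  have hcard : Fintype.card S = k := by
    rw [Fintype.card_coe, hS, Finset.card_image_of_injective _ hf, Finset.card_univ,
      Fintype.card_fin]
  have hbf : Function.Bijective (fun i => (⟨f i, hmf i⟩ : S)) := by
    rw [Fintype.bijective_iff_injective_and_card]
    exact ⟨fun i j h => hf (by simpa using congrArg Subtype.val h), by simp [hcard]⟩
  have hbg : Function.Bijective (fun i => (⟨g i, hmg i⟩ : S)) := by
    rw [Fintype.bijective_iff_injective_and_card]
    exact ⟨fun i j h => hg (by simpa using congrArg Subtype.val h), by simp [hcard]⟩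
  refine ⟨(Equiv.ofBijective _ hbf).trans (Equiv.ofBijective _ hbg).symm, ?_⟩
  funext i
  have : (⟨g ((Equiv.ofBijective _ hbg).symm (Equiv.ofBijective _ hbf i)), _⟩ : S)
      = Equiv.ofBijective _ hbf i := Equiv.ofBijective_apply_symm_apply _ hbg _
  simpa using (congrArg Subtype.val this).symm

lemma image_comp_perm {k N : ℕ} (g : Fin k → Fin N) (σ : Equiv.Perm (Fin k)) :
    Finset.univ.image (g ∘ σ) = Finset.univ.image g := by
  ext x
  simp only [Finset.mem_image, mem_univ, true_and, Function.comp_apply]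
  exact ⟨fun ⟨i, hi⟩ => ⟨σ i, hi⟩, fun ⟨i, hi⟩ => ⟨σ.symm i, by simpa using hi⟩⟩

lemma cauchy_binet {k N : ℕ} (A : Matrix (Fin k) (Fin N) ℝ) (B : Matrix (Fin N) (Fin k) ℝ) :
    (A * B).det = ∑ g ∈ Finset.univ.filter (fun g : Fin k → Fin N => StrictMono g),
      (A.submatrix id g).det * (B.submatrix g id).det := by
  have step1 : (A * B).det
      = ∑ f : Fin k → Fin N, (∏ i, A i (f i)) * (Matrix.of fun i j => B (f i) j).det := by
    have h1 : (A * B).det = Matrix.detRowAlternating.toMultilinearMap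
        (fun i : Fin k => ∑ l : Fin N, A i l • B l) := by
      congr 1
      ext i j
      simp [Matrix.mul_apply]
    rw [h1, MultilinearMap.map_sum]
    refine Finset.sum_congr rfl fun f _ => ?_
    have := MultilinearMap.map_smul_univ
      (Matrix.detRowAlternating.toMultilinearMap : MultilinearMap ℝ (fun _ : Fin k => Fin k → ℝ) ℝ)
      (fun i => A i (f i)) (fun i => B (f i))
    rw [this, smul_eq_mul]
    rfl
  rw [step1]
  -- restrict to injective f
  rw [← Finset.sum_filter_of_ne (p := fun f : Fin k → Fin N => Function.Injective f)
    (by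
      intro f _ hne
      by_contra hinj
      apply hne
      obtain ⟨i, j, hij, hne'⟩ : ∃ i j, f i = f j ∧ i ≠ j := by
        rw [Function.Injective] at hinj
        push_neg at hinj
        exact hinj
      have : (Matrix.of fun i j => B (f i) j).det = 0 :=
        Matrix.det_zero_of_row_eq hne' (by funext c; simp [hij])
      rw [this, mul_zero])]
  -- fiberwise over sortOf
  rw [← Finset.sum_fiberwise_of_maps_to (g := sortOf)
    (t := Finset.univ.filter (fun g : Fin k → Fin N => StrictMono g))
    (fun f hf => by
      simp only [Finset.mem_filter, mem_univ, true_and] at hf ⊢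
      exact sortOf_strictMono hf)]
  refine Finset.sum_congr rfl fun g hg => ?_
  simp only [Finset.mem_filter, mem_univ, true_and] at hg
  -- inner fiber sum equals minor product
  have inner : ∑ f ∈ (Finset.univ.filter (fun f : Fin k → Fin N => Function.Injective f)).filter
        (fun f => sortOf f = g),
        (∏ i, A i (f i)) * (Matrix.of fun i j => B (f i) j).det
      = ∑ σ : Equiv.Perm (Fin k),
        (∏ i, A i (g (σ i))) * (Matrix.of fun i j => B (g (σ i)) j).det := by
    refine (Finset.sum_bij (fun (σ : Equiv.Perm (Fin k)) _ => g ∘ σ) ?_ ?_ ?_ ?_).symm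
    · intro σ _
      simp only [Finset.mem_filter, mem_univ, true_and]
      refine ⟨hg.injective.comp σ.injective, ?_⟩
      exact sortOf_eq (hg.injective.comp σ.injective) hg (image_comp_perm g σ)
    · intro σ₁ _ σ₂ _ h
      ext i
      exact congrArg Fin.val (hg.injective (congrFun h i))
    · intro f hf
      simp only [Finset.mem_filter, mem_univ, true_and] at hf
      obtain ⟨hfinj, hsort⟩ := hf
      obtain ⟨σ, hσ⟩ := exists_perm_comp f g hfinj hg.injective
        (by rw [← image_sortOf hfinj, hsort])
      exact ⟨σ, mem_univ σ, hσ.symm⟩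
    · intro σ _
      rfl
  rw [inner]
  have hperm : ∀ σ : Equiv.Perm (Fin k), (Matrix.of fun i j => B (g (σ i)) j).det
      = (Equiv.Perm.sign σ : ℝ) * (B.submatrix g id).det := by
    intro σ
    have := Matrix.det_permute σ (B.submatrix g id)
    convert this using 2
    rfl
  have : ∀ σ : Equiv.Perm (Fin k),
      (∏ i, A i (g (σ i))) * (Matrix.of fun i j => B (g (σ i)) j).det
      = ((Equiv.Perm.sign σ : ℝ) * ∏ i, A i (g (σ i))) * (B.submatrix g id).det := by
    intro σ
    rw [hperm σ]; ring
  rw [Finset.sum_congr rfl fun σ _ => this σ, ← Finset.sum_mul]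
  congr 1
  -- ∑ σ, sign σ * ∏ i, A i (g (σ i)) = det (A.submatrix id g)
  rw [Matrix.det_apply']
  refine Fintype.sum_equiv (Equiv.inv (Equiv.Perm (Fin k))) _ _ fun σ => ?_
  simp only [Equiv.inv_apply]
  congr 1
  · simp
  · refine Fintype.prod_equiv σ _ _ fun i => ?_
    simp [Matrix.submatrix_apply]
theorem quasiConsistent_riordan_TPOrder_of_PFOrder (a z : ℕ → ℝ) (ha : ∀ n, 0 ≤ a n) (hz : ∀ n, 0 ≤ z n)
    (hcons : ∀ n, z n = a (n + 1)) (r : ℕ) (hr : 1 ≤ r)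
    (R : ℕ → ℕ → ℝ)
    (hR00 : R 0 0 = 1)
    (htri : ∀ n k, n < k → R n k = 0)
    (hZ : ∀ n, R (n + 1) 0 = ∑ j ∈ Finset.range (n + 1), z j * R n j)
    (hA : ∀ n k, R (n + 1) (k + 1) = ∑ j ∈ Finset.range (n + 1), a j * R n (k + j))
    (hPF : IsPFOrder r a) :
    IsTPOrder r R := by
  set M : ℕ → ℕ → ℝ := fun j c => if c ≤ j + 1 then a (j + 1 - c) else 0 with hM
  -- the one-step recurrence in matrix form
  have hstep : ∀ n N : ℕ, n < N → ∀ c, R (n + 1) c = ∑ j ∈ Finset.range N, R n j * M j c := by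
    intro n N hN c
    have base : R (n + 1) c = ∑ j ∈ Finset.range (n + 1), R n j * M j c := by
      cases c with
      | zero =>
        rw [hZ]
        refine Finset.sum_congr rfl fun j _ => ?_
        have : M j 0 = a (j + 1) := by simp [hM]
        rw [this, hcons, mul_comm]
      | succ c' =>
        rw [hA n c']
        have e1 : ∑ j ∈ Finset.Ico c' (c' + (n + 1)), a (j - c') * R n j
            = ∑ j ∈ Finset.range (n + 1), a j * R n (c' + j) := by
          rw [Finset.sum_Ico_eq_sum_range]
          simp only [Nat.add_sub_cancel_left]
        rw [← e1]
        have e2 : ∑ j ∈ Finset.range (n + 1), R n j * M j (c' + 1)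
            = ∑ j ∈ Finset.Ico 0 (c' + (n + 1)), R n j * M j (c' + 1) := by
          rw [← Finset.range_eq_Ico]
          apply Finset.sum_subset (Finset.range_subset_range.2 (by omega))
          intro j hj hnj
          rw [Finset.mem_range] at hj hnj
          rw [htri n j (by omega), zero_mul]
        rw [e2, ← Finset.sum_Ico_consecutive _ (Nat.zero_le c')
          (by omega : c' ≤ c' + (n + 1))]
        have e3 : ∑ j ∈ Finset.Ico 0 c', R n j * M j (c' + 1) = 0 := by
          apply Finset.sum_eq_zero
          intro j hj
          rw [Finset.mem_Ico] at hj
          have : M j (c' + 1) = 0 := by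
            simp only [hM]
            rw [if_neg (by omega)]
          rw [this, mul_zero]
        rw [e3, zero_add]
        refine Finset.sum_congr rfl fun j hj => ?_
        rw [Finset.mem_Ico] at hj
        simp only [hM]
        rw [if_pos (by omega : c' + 1 ≤ j + 1)]
        have : j + 1 - (c' + 1) = j - c' := by omega
        rw [this, mul_comm]
    rw [base]
    refine Finset.sum_subset (Finset.range_subset_range.2 hN) fun j hj hnj => ?_
    rw [Finset.mem_range] at hnj
    rw [htri n j (by omega), zero_mul]
  -- main induction on k + sum of row indices
  suffices H : ∀ m k, k ≤ r → ∀ (rows cols : Fin k → ℕ), StrictMono rows → StrictMono cols →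
      k + ∑ i, rows i ≤ m → 0 ≤ (Matrix.of fun i j => R (rows i) (cols j)).det by
    intro k hk rows cols hrows hcols
    exact H _ k hk rows cols hrows hcols le_rfl
  intro m
  induction m using Nat.strong_induction_on with
  | _ m IH =>
  intro k hk rows cols hrows hcols hm
  match k, hk, rows, cols, hrows, hcols, hm with
  | 0, hk, rows, cols, hrows, hcols, hm =>
    rw [Matrix.det_fin_zero]
    exact zero_le_one
  | (m' + 1), hk, rows, cols, hrows, hcols, hm =>
    by_cases h0 : rows 0 = 0
    · by_cases hc0 : cols 0 = 0
      · -- expand along the first row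
        rw [Matrix.det_succ_row_zero]
        have hzero : ∀ j : Fin (m' + 1), j ≠ 0 →
            (-1 : ℝ) ^ (j : ℕ) * (Matrix.of fun i j => R (rows i) (cols j)) 0 j *
              ((Matrix.of fun i j => R (rows i) (cols j)).submatrix Fin.succ j.succAbove).det
            = 0 := by
          intro j hj
          have hpos : 0 < cols j := by
            have := hcols (Fin.pos_of_ne_zero hj)
            omega
          have : (Matrix.of fun i j => R (rows i) (cols j)) 0 j = 0 := by
            simp only [Matrix.of_apply, h0]
            exact htri 0 (cols j) hpos
          rw [this, mul_zero, zero_mul]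
        rw [Finset.sum_eq_single_of_mem 0 (Finset.mem_univ 0) (fun j _ hj => hzero j hj)]
        simp only [Matrix.of_apply, h0, hc0, Fin.val_zero, pow_zero, hR00, one_mul,
          Fin.succAbove_zero]
        have hrows' : StrictMono (fun i : Fin m' => rows i.succ) :=
          hrows.comp Fin.strictMono_succ
        have hcols' : StrictMono (fun i : Fin m' => cols i.succ) :=
          hcols.comp Fin.strictMono_succ
        have hmeas : m' + ∑ i : Fin m', rows i.succ < m := by
          have hsum : ∑ i : Fin (m' + 1), rows i = rows 0 + ∑ i : Fin m', rows i.succ :=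
            Fin.sum_univ_succ rows
          omega
        exact IH _ hmeas m' (le_trans (Nat.le_succ m') hk)
          (fun i => rows i.succ) (fun i => cols i.succ) hrows' hcols' le_rfl
      · -- the first row of the minor vanishes
        have hrow0 : ∀ j : Fin (m' + 1), (Matrix.of fun i j => R (rows i) (cols j)) 0 j = 0 := by
          intro j
          have hpos : 0 < cols j := by
            have h1 : cols 0 ≤ cols j := hcols.monotone (Fin.zero_le j)
            omega
          simp only [Matrix.of_apply, h0]
          exact htri 0 (cols j) hpos
        rw [Matrix.det_eq_zero_of_row_eq_zero 0 hrow0]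
    · -- all row indices positive : factor through M and use Cauchy-Binet
      have h1 : ∀ i, 1 ≤ rows i := fun i => by
        have := hrows.monotone (Fin.zero_le i)
        omega
      have heq : (Matrix.of fun i j => R (rows i) (cols j)) =
          (Matrix.of fun (i : Fin (m' + 1)) (l : Fin (rows (Fin.last m'))) =>
            R (rows i - 1) (l : ℕ)) *
          (Matrix.of fun (l : Fin (rows (Fin.last m'))) j => M (l : ℕ) (cols j)) := by
        ext i j
        rw [Matrix.mul_apply]
        have hlt : rows i - 1 < rows (Fin.last m') := by
          have := hrows.monotone (Fin.le_last i)
          have := h1 i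
          omega
        have hri : rows i = (rows i - 1) + 1 := by
          have := h1 i
          omega
        rw [Matrix.of_apply, hri, hstep _ _ hlt (cols j),
          ← Fin.sum_univ_eq_sum_range (fun l => R (rows i - 1) l * M l (cols j))]
        rfl
      rw [heq, cauchy_binet]
      apply Finset.sum_nonneg
      intro g hg
      rw [Finset.mem_filter] at hg
      have hgmono : StrictMono g := hg.2
      apply mul_nonneg
      · have hrows'' : StrictMono (fun i : Fin (m' + 1) => rows i - 1) := fun i j hij => by
          have := hrows hij
          have := h1 i
          show rows i - 1 < rows j - 1
          omega
        have hcols'' : StrictMono (fun j : Fin (m' + 1) => ((g j : ℕ))) :=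
          fun i j hij => hgmono hij
        have hmeas : (m' + 1) + ∑ i : Fin (m' + 1), (rows i - 1) < m := by
          have hsum : ∑ i : Fin (m' + 1), rows i
              = (∑ i : Fin (m' + 1), (rows i - 1)) + (m' + 1) := by
            have he : ∀ i : Fin (m' + 1), rows i = (rows i - 1) + 1 := fun i => by
              have := h1 i
              omega
            rw [Finset.sum_congr rfl fun i _ => he i, Finset.sum_add_distrib]
            simp
          omega
        exact IH _ hmeas (m' + 1) hk (fun i => rows i - 1) (fun j => (g j : ℕ))
          hrows'' hcols'' le_rfl
      · exact hPF (m' + 1) hk (fun l => (g l : ℕ) + 1) cols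
          (fun i j hij => by have := hgmono hij; show (g i : ℕ) + 1 < (g j : ℕ) + 1; omega) hcols
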